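/- Let c₀ be the Banach space of scalar sequences (x_n)_{n≥1} converging to 0, with the supremum norm, let (w_n)_{n≥1} be a bounded sequence of nonzero scalars, and let B_w : c₀ → c₀ be the weighted backward shift B_w((x_n)_{n≥1}) = (w_{n+1} x_{n+1})_{n≥1}. Then B_w is chaotic if and only if B_w has dense small periodic sets. -/

import Mathlib

open scoped ZeroAtInfty
open Filter Finset

set_option synthInstance.maxHeartbeats 1000000
set_option maxHeartbeats 1000000

namespace WS14

noncomputable def mk0 (f : ℕ → ℂ) (h : Tendsto f atTop (nhds 0)) : C₀(ℕ, ℂ) where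
  toFun := f
  continuous_toFun := continuous_of_discreteTopology
  zero_at_infty' := by rwa [cocompact_eq_atTop]

@[simp] lemma mk0_apply (f : ℕ → ℂ) (h) (n : ℕ) : mk0 f h n = f n := rfl

lemma norm_apply_le (f : C₀(ℕ, ℂ)) (n : ℕ) : ‖f n‖ ≤ ‖f‖ := by
  rw [← ZeroAtInftyContinuousMap.norm_toBCF_eq_norm]
  exact f.toBCF.norm_coe_le_norm n

lemma norm_le_of (f : C₀(ℕ, ℂ)) {C : ℝ} (h0 : 0 ≤ C) (h : ∀ n, ‖f n‖ ≤ C) : ‖f‖ ≤ C := by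
  rw [← ZeroAtInftyContinuousMap.norm_toBCF_eq_norm]
  exact (BoundedContinuousFunction.norm_le h0).mpr h

lemma tendsto_zero (f : C₀(ℕ, ℂ)) : Tendsto (fun n => f n) atTop (nhds 0) := by
  have := ZeroAtInftyContinuousMapClass.zero_at_infty f
  rwa [cocompact_eq_atTop] at this

noncomputable def P (w : ℕ → ℂ) (n : ℕ) : ℂ := ∏ i ∈ Finset.range n, w (i + 1)

lemma P_ne (w : ℕ → ℂ) (hw : ∀ n, w n ≠ 0) (n : ℕ) : P w n ≠ 0 :=
  Finset.prod_ne_zero_iff.mpr fun i _ => hw (i + 1)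

lemma P_add (w : ℕ → ℂ) (n j : ℕ) :
    P w (n + j) = P w n * ∏ i ∈ Finset.range j, w (n + i + 1) := by
  rw [P, Finset.prod_range_add]; rfl

lemma pow_apply (w : ℕ → ℂ) (T : C₀(ℕ, ℂ) →L[ℂ] C₀(ℕ, ℂ))
    (hT : ∀ (x : C₀(ℕ, ℂ)) (n : ℕ), T x n = w (n + 1) * x (n + 1)) :
    ∀ (j : ℕ) (x : C₀(ℕ, ℂ)) (n : ℕ),
      (T ^ j) x n = (∏ i ∈ Finset.range j, w (n + i + 1)) * x (n + j) := by
  intro j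
  induction j with
  | zero => intro x n; simp
  | succ j ih =>
    intro x n
    have h1 : (T ^ (j+1)) x = (T ^ j) (T x) := by
      rw [pow_succ]; rfl
    rw [h1, ih (T x) n, hT x (n + j)]
    rw [Finset.prod_range_succ, mul_assoc]
    rfl

lemma pow_apply_zero (w : ℕ → ℂ) (T : C₀(ℕ, ℂ) →L[ℂ] C₀(ℕ, ℂ))
    (hT : ∀ (x : C₀(ℕ, ℂ)) (n : ℕ), T x n = w (n + 1) * x (n + 1))
    (j : ℕ) (x : C₀(ℕ, ℂ)) : (T ^ j) x 0 = P w j * x j := by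
  rw [pow_apply w T hT j x 0]
  simp [P]

lemma norm_P_tendsto (w : ℕ → ℂ) (hw : ∀ n, w n ≠ 0) (hbd : ∃ C : ℝ, ∀ n, ‖w n‖ ≤ C)
    (T : C₀(ℕ, ℂ) →L[ℂ] C₀(ℕ, ℂ))
    (hT : ∀ (x : C₀(ℕ, ℂ)) (n : ℕ), T x n = w (n + 1) * x (n + 1))
    (h : ∀ U : Set C₀(ℕ, ℂ), IsOpen U → U.Nonempty →
      ∃ Y : Set C₀(ℕ, ℂ), Y.Nonempty ∧ IsClosed Y ∧ Y ⊆ U ∧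
        ∃ k : ℕ, 1 ≤ k ∧ (fun y => (T ^ k) y) '' Y ⊆ Y) :
    Tendsto (fun n => ‖P w n‖) atTop atTop := by
  obtain ⟨C, hC⟩ := hbd
  set C' : ℝ := max C 1 with hC'def
  have hC1 : (1:ℝ) ≤ C' := le_max_right _ _
  have hC0 : (0:ℝ) < C' := lt_of_lt_of_le one_pos hC1
  have hwC : ∀ n, ‖w n‖ ≤ C' := fun n => (hC n).trans (le_max_left _ _)
  -- the delta sequence at 0
  have he0 : Tendsto (fun n : ℕ => if n = 0 then (1:ℂ) else 0) atTop (nhds 0) := by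
    apply Tendsto.congr' _ tendsto_const_nhds
    filter_upwards [eventually_ge_atTop 1] with n hn
    have : n ≠ 0 := by omega
    simp [this]
  set e0 : C₀(ℕ, ℂ) := mk0 _ he0 with he0def
  obtain ⟨Y, ⟨y, hy⟩, -, hYU, k, hk, hYk⟩ :=
    h (Metric.ball e0 (1/2)) Metric.isOpen_ball ⟨e0, Metric.mem_ball_self (by norm_num)⟩
  -- iterates stay in Y
  have hmem : ∀ m, (T ^ (k * m)) y ∈ Y := by
    intro m
    induction m with
    | zero => simpa using hy
    | succ m ih =>
      have : (T ^ k) ((T ^ (k * m)) y) ∈ Y := hYk ⟨_, ih, rfl⟩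
      have he : (T ^ k) ((T ^ (k * m)) y) = (T ^ (k * (m+1))) y := by
        rw [show k * (m+1) = k + k * m by ring, pow_add]; rfl
      rwa [he] at this
  -- key estimate
  have key : ∀ m, (1:ℝ)/2 ≤ ‖P w (k * m)‖ * ‖y (k * m)‖ := by
    intro m
    set z := (T ^ (k * m)) y with hz
    have hzU : z ∈ Metric.ball e0 (1/2) := hYU (hmem m)
    have h0 : ‖z 0 - 1‖ < 1/2 := by
      have h1 : ‖(z - e0) 0‖ ≤ ‖z - e0‖ := norm_apply_le _ 0
      have h2 : ‖z - e0‖ < 1/2 := by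
        rwa [Metric.mem_ball, dist_eq_norm] at hzU
      have h3 : (z - e0) 0 = z 0 - 1 := by
        simp [he0def]
      rw [h3] at h1; linarith
    have h4 : (1:ℝ)/2 ≤ ‖z 0‖ := by
      have h5 : ‖z 0 - (z 0 - 1)‖ ≤ ‖z 0‖ + ‖z 0 - 1‖ := norm_sub_le _ _
      simp only [sub_sub_cancel, norm_one] at h5
      linarith
    rwa [hz, pow_apply_zero w T hT, norm_mul] at h4
  -- conclude
  rw [tendsto_atTop]
  intro M
  rw [eventually_atTop]
  set M' : ℝ := max M 1 with hM'def
  have hM1 : (1:ℝ) ≤ M' := le_max_right _ _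
  have hM0 : (0:ℝ) < M' := lt_of_lt_of_le one_pos hM1
  have hCk : (0:ℝ) < C' ^ k := pow_pos hC0 k
  set δ : ℝ := 1 / (2 * C' ^ k * M') with hδdef
  have hδ0 : 0 < δ := by positivity
  have := (NormedAddCommGroup.tendsto_nhds_zero.mp (tendsto_zero y)) δ hδ0
  obtain ⟨N₁, hN₁⟩ := eventually_atTop.mp this
  refine ⟨k * N₁ + k, fun n hn => ?_⟩
  set m : ℕ := n / k with hmdef
  have hkm : k * m ≤ n := by
    rw [hmdef, mul_comm]; exact Nat.div_mul_le_self n k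
  have hnm : n < k * (m + 1) := by
    rw [hmdef, mul_comm]
    exact (Nat.div_lt_iff_lt_mul (Nat.pos_of_ne_zero (by omega))).mp (Nat.lt_succ_self _)
  set j : ℕ := k * (m + 1) with hjdef
  have hj2 : j = k * m + k := by rw [hjdef]; ring
  have hjN : N₁ ≤ j := by
    have : k * N₁ + k ≤ j := by omega
    calc N₁ ≤ k * N₁ := Nat.le_mul_of_pos_left _ (by omega)
    _ ≤ j := by omega
  have hyj : ‖y j‖ < δ := hN₁ j hjN
  have hPj : C' ^ k * M' ≤ ‖P w j‖ := by
    have h1 := key (m + 1)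
    have h2 : ‖P w j‖ * ‖y j‖ ≤ ‖P w j‖ * δ :=
      mul_le_mul_of_nonneg_left hyj.le (norm_nonneg _)
    have h3 : (1:ℝ)/2 ≤ ‖P w j‖ * δ := le_trans h1 h2
    rw [hδdef, mul_one_div, le_div_iff₀ (by positivity)] at h3
    calc C' ^ k * M' = 1/2 * (2 * C' ^ k * M') := by ring
      _ ≤ ‖P w j‖ := h3
  -- fill in between km and j
  have hfill : ‖P w j‖ ≤ ‖P w n‖ * C' ^ k := by
    have hnj : n ≤ j := hnm.le
    have : P w j = P w n * ∏ i ∈ Finset.range (j - n), w (n + i + 1) := by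
      rw [← P_add w n (j - n), Nat.add_sub_cancel' hnj]
    rw [this, norm_mul]
    apply mul_le_mul_of_nonneg_left _ (norm_nonneg _)
    calc ‖∏ i ∈ Finset.range (j - n), w (n + i + 1)‖
        ≤ ∏ i ∈ Finset.range (j - n), ‖w (n + i + 1)‖ := norm_prod_le _ _
      _ ≤ ∏ _i ∈ Finset.range (j - n), C' := Finset.prod_le_prod
            (fun _ _ => norm_nonneg _) (fun i _ => hwC _)
      _ = C' ^ (j - n) := by rw [Finset.prod_const, Finset.card_range]
      _ ≤ C' ^ k := pow_le_pow_right₀ hC1 (by omega)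
  have : M' * C' ^ k ≤ ‖P w n‖ * C' ^ k := by nlinarith
  have hfin : M' ≤ ‖P w n‖ := le_of_mul_le_mul_right this hCk
  exact le_trans (le_max_left _ _) hfin

lemma arith1 (M p ε : ℝ) (hM : 0 < M) (hε : 0 < ε) (h2 : 3 * M / ε ≤ p) :
    M / p ≤ ε / 3 := by
  have hp : 0 < p := lt_of_lt_of_le (by positivity) h2
  rw [div_le_div_iff₀ hp (by norm_num)]
  rw [div_le_iff₀ hε] at h2
  nlinarith

lemma dense_periodic (w : ℕ → ℂ) (hw : ∀ n, w n ≠ 0)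
    (T : C₀(ℕ, ℂ) →L[ℂ] C₀(ℕ, ℂ))
    (hT : ∀ (x : C₀(ℕ, ℂ)) (n : ℕ), T x n = w (n + 1) * x (n + 1))
    (hP : Tendsto (fun n => ‖P w n‖) atTop atTop) :
    Dense {x : C₀(ℕ, ℂ) | ∃ n : ℕ, 1 ≤ n ∧ (T ^ n) x = x} := by
  rw [Metric.dense_iff]
  intro f ε hε
  -- truncation level
  obtain ⟨N₀, hN₀⟩ := eventually_atTop.mp
    ((NormedAddCommGroup.tendsto_nhds_zero.mp (tendsto_zero f)) (ε/3) (by positivity))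
  set x' : ℕ → ℂ := fun n => if n < N₀ then f n else 0 with hx'def
  set M : ℝ := 1 + ∑ i ∈ Finset.range N₀, ‖f i * P w i‖ with hMdef
  have hM0 : 0 < M := by
    have : (0:ℝ) ≤ ∑ i ∈ Finset.range N₀, ‖f i * P w i‖ :=
      Finset.sum_nonneg fun i _ => norm_nonneg _
    linarith
  have hMx : ∀ n, ‖x' n * P w n‖ ≤ M := by
    intro n
    by_cases hn : n < N₀
    · have : ‖f n * P w n‖ ≤ ∑ i ∈ Finset.range N₀, ‖f i * P w i‖ :=
        Finset.single_le_sum (f := fun i => ‖f i * P w i‖)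
          (fun i _ => norm_nonneg _) (Finset.mem_range.mpr hn)
      simp only [hx'def, if_pos hn]
      linarith
    · simp [hx'def, if_neg hn, hM0.le]
  -- choose period k
  obtain ⟨N₂, hN₂⟩ := eventually_atTop.mp ((tendsto_atTop.mp hP) (3 * M / ε))
  set k : ℕ := max (max N₀ 1) N₂ with hkdef
  have hk1 : 1 ≤ k := le_trans (le_max_right N₀ 1) (le_max_left _ _)
  have hkN₀ : N₀ ≤ k := le_trans (le_max_left N₀ 1) (le_max_left _ _)
  have hPk : ∀ j, k ≤ j → 3 * M / ε ≤ ‖P w j‖ := fun j hj =>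
    hN₂ j (le_trans (le_max_right _ _) hj)
  -- the periodic candidate
  set g : ℕ → ℂ := fun n => x' (n % k) * P w (n % k) / P w n with hgdef
  have hgbd : ∀ n, ‖g n‖ ≤ M / ‖P w n‖ := by
    intro n
    rw [hgdef]
    simp only [norm_div]
    have hPn : 0 < ‖P w n‖ := norm_pos_iff.mpr (P_ne w hw n)
    exact div_le_div_of_nonneg_right (hMx _) hPn.le
  have hg0 : Tendsto g atTop (nhds 0) := by
    rw [tendsto_zero_iff_norm_tendsto_zero]
    apply squeeze_zero (fun n => norm_nonneg _) hgbd
    exact Tendsto.div_atTop tendsto_const_nhds hP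
  set y : C₀(ℕ, ℂ) := mk0 g hg0 with hydef
  -- periodicity
  have hper : (T ^ k) y = y := by
    ext n
    rw [pow_apply w T hT k y n]
    have hPnk : P w (n + k) = P w n * ∏ i ∈ Finset.range k, w (n + i + 1) := P_add w n k
    have hyapp : ∀ m, y m = x' (m % k) * P w (m % k) / P w m := fun m => rfl
    rw [hyapp (n + k), hyapp n, Nat.add_mod_right]
    have h1 : P w n ≠ 0 := P_ne w hw n
    have h2 : P w (n + k) ≠ 0 := P_ne w hw (n + k)
    have h3 : (∏ i ∈ Finset.range k, w (n + i + 1)) ≠ 0 :=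
      Finset.prod_ne_zero_iff.mpr fun i _ => hw _
    field_simp
    rw [hPnk]; ring
  -- distance estimate
  have hdist : dist f y < ε := by
    rw [dist_eq_norm]
    have hbdd : ∀ n, ‖(f - y) n‖ ≤ 2 * ε / 3 := by
      intro n
      have happ : (f - y) n = f n - y n := rfl
      by_cases hnk : n < k
      · have hmod : n % k = n := Nat.mod_eq_of_lt hnk
        by_cases hn0 : n < N₀
        · have : y n = f n := by
            show g n = f n
            rw [hgdef]
            simp only [hmod, hx'def, if_pos hn0]
            rw [mul_div_assoc, div_self (P_ne w hw n), mul_one]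
          rw [happ, this, sub_self, norm_zero]
          positivity
        · have hyn : y n = 0 := by
            show g n = 0
            rw [hgdef]
            simp [hmod, hx'def, if_neg hn0]
          rw [happ, hyn, sub_zero]
          have := hN₀ n (by omega)
          linarith
      · -- n ≥ k : f n small and y n small
        have hfn : ‖f n‖ < ε / 3 := hN₀ n (by omega)
        have hyn : ‖y n‖ ≤ ε / 3 := by
          have h1 : ‖y n‖ ≤ M / ‖P w n‖ := hgbd n
          have h2 : 3 * M / ε ≤ ‖P w n‖ := hPk n (by omega)
          have hPn : 0 < ‖P w n‖ := norm_pos_iff.mpr (P_ne w hw n)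
          exact h1.trans (arith1 M _ ε hM0 hε h2)
        calc ‖(f - y) n‖ = ‖f n - y n‖ := by rw [happ]
          _ ≤ ‖f n‖ + ‖y n‖ := norm_sub_le _ _
          _ ≤ 2 * ε / 3 := by linarith
    calc ‖f - y‖ ≤ 2 * ε / 3 := norm_le_of _ (by positivity) hbdd
      _ < ε := by linarith
  exact ⟨y, Metric.mem_ball'.mpr hdist, k, hk1, hper⟩

lemma arith2 (K ε p : ℝ) (hK : 0 < K) (hε : 0 < ε) (hp : K / ε ≤ p) : K / p ≤ ε := by
  have hp0 : 0 < p := lt_of_lt_of_le (by positivity) hp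
  rw [div_le_iff₀ hp0]
  rw [div_le_iff₀ hε] at hp
  nlinarith

section Sig
variable (w : ℕ → ℂ)

/-- raw coordinates of the `m`-fold weighted forward shift of `d`. -/
noncomputable def sfun (m : ℕ) (d : ℕ → ℂ) : ℕ → ℂ :=
  fun n => if m ≤ n then d (n - m) * P w (n - m) / P w n else 0

noncomputable def K (N : ℕ) (d : ℕ → ℂ) : ℝ := 1 + ∑ i ∈ Finset.range N, ‖d i * P w i‖

lemma K_pos (N : ℕ) (d : ℕ → ℂ) : 0 < K w N d := by
  have : (0:ℝ) ≤ ∑ i ∈ Finset.range N, ‖d i * P w i‖ :=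
    Finset.sum_nonneg fun i _ => norm_nonneg _
  rw [K]; linarith

lemma sfun_bound (hw : ∀ n, w n ≠ 0) {N : ℕ} {d : ℕ → ℂ} (hd : ∀ i, N ≤ i → d i = 0) (m n : ℕ) :
    ‖sfun w m d n‖ ≤ K w N d / ‖P w n‖ := by
  have hPn : 0 < ‖P w n‖ := norm_pos_iff.mpr (P_ne w hw n)
  have hKpos := K_pos w N d
  rw [sfun]
  by_cases hmn : m ≤ n
  · rw [if_pos hmn]
    by_cases hN : n - m < N
    · rw [norm_div]
      apply div_le_div_of_nonneg_right _ hPn.le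
      have : ‖d (n-m) * P w (n-m)‖ ≤ ∑ i ∈ Finset.range N, ‖d i * P w i‖ :=
        Finset.single_le_sum (f := fun i => ‖d i * P w i‖)
          (fun i _ => norm_nonneg _) (Finset.mem_range.mpr hN)
      rw [K]; linarith
    · rw [hd (n - m) (by omega)]
      simp only [zero_mul, zero_div, norm_zero]
      positivity
  · rw [if_neg hmn, norm_zero]
    positivity

lemma sfun_tendsto (hw : ∀ n, w n ≠ 0) {N : ℕ} {d : ℕ → ℂ} (hd : ∀ i, N ≤ i → d i = 0)
    (hP : Tendsto (fun n => ‖P w n‖) atTop atTop) (m : ℕ) :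
    Tendsto (sfun w m d) atTop (nhds 0) := by
  rw [tendsto_zero_iff_norm_tendsto_zero]
  apply squeeze_zero (fun n => norm_nonneg _) (sfun_bound w hw hd m)
  exact Tendsto.div_atTop tendsto_const_nhds hP

variable (hw : ∀ n, w n ≠ 0) (hP : Tendsto (fun n => ‖P w n‖) atTop atTop)

noncomputable def sig {N : ℕ} (d : ℕ → ℂ) (hd : ∀ i, N ≤ i → d i = 0) (m : ℕ) : C₀(ℕ, ℂ) :=
  mk0 (sfun w m d) (sfun_tendsto w hw hd hP m)

lemma sig_apply {N : ℕ} (d : ℕ → ℂ) (hd : ∀ i, N ≤ i → d i = 0) (m n : ℕ) :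
    sig w hw hP d hd m n = sfun w m d n := rfl

lemma sig_norm_small {N : ℕ} (d : ℕ → ℂ) (hd : ∀ i, N ≤ i → d i = 0)
    {ε : ℝ} (hε : 0 < ε) :
    ∃ M₀, ∀ m, M₀ ≤ m → ‖sig w hw hP d hd m‖ ≤ ε := by
  have hK := K_pos w N d
  obtain ⟨M₀, hM₀⟩ := eventually_atTop.mp ((tendsto_atTop.mp hP) (K w N d / ε))
  refine ⟨M₀, fun m hm => norm_le_of _ hε.le fun n => ?_⟩
  rw [sig_apply, sfun]
  by_cases hmn : m ≤ n
  · rw [if_pos hmn]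
    have h1 : ‖d (n-m) * P w (n-m) / P w n‖ ≤ K w N d / ‖P w n‖ := by
      have := sfun_bound w hw hd m n
      rwa [sfun, if_pos hmn] at this
    exact h1.trans (arith2 _ _ _ hK hε (hM₀ n (by omega)))
  · rw [if_neg hmn, norm_zero]; positivity

variable (T : C₀(ℕ, ℂ) →L[ℂ] C₀(ℕ, ℂ))

lemma pow_sig_zero (hT : ∀ (x : C₀(ℕ, ℂ)) (n : ℕ), T x n = w (n + 1) * x (n + 1)) {N : ℕ} (d : ℕ → ℂ) (hd : ∀ i, N ≤ i → d i = 0)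
    (m j : ℕ) (hj : m + N ≤ j) : (T ^ j) (sig w hw hP d hd m) = 0 := by
  ext n
  rw [pow_apply w T hT j _ n, sig_apply, sfun, if_pos (by omega : m ≤ n + j),
    hd (n + j - m) (by omega)]
  simp

lemma pow_sig_self (hT : ∀ (x : C₀(ℕ, ℂ)) (n : ℕ), T x n = w (n + 1) * x (n + 1)) {N : ℕ} (d : ℕ → ℂ) (hd : ∀ i, N ≤ i → d i = 0) (m : ℕ)
    (d0 : Tendsto d atTop (nhds 0)) :
    (T ^ m) (sig w hw hP d hd m) = mk0 d d0 := by
  ext n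
  rw [pow_apply w T hT m _ n, sig_apply, sfun, if_pos (by omega : m ≤ n + m)]
  have hidx : n + m - m = n := by omega
  rw [hidx, mk0_apply]
  have hQ : P w (n + m) = P w n * ∏ i ∈ Finset.range m, w (n + i + 1) := P_add w n m
  have h1 : P w n ≠ 0 := P_ne w hw n
  have h2 : P w (n + m) ≠ 0 := P_ne w hw (n + m)
  field_simp
  rw [hQ]; ring

lemma pow_sig_shift (hT : ∀ (x : C₀(ℕ, ℂ)) (n : ℕ), T x n = w (n + 1) * x (n + 1)) {N : ℕ} (d : ℕ → ℂ) (hd : ∀ i, N ≤ i → d i = 0)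
    (a m : ℕ) (ham : a ≤ m) :
    (T ^ a) (sig w hw hP d hd m) = sig w hw hP d hd (m - a) := by
  ext n
  rw [pow_apply w T hT a _ n, sig_apply, sig_apply, sfun, sfun]
  by_cases hmn : m - a ≤ n
  · rw [if_pos (by omega : m ≤ n + a), if_pos hmn]
    have hidx : n + a - m = n - (m - a) := by omega
    have hQ : P w (n + a) = P w n * ∏ i ∈ Finset.range a, w (n + i + 1) := P_add w n a
    have h1 : P w n ≠ 0 := P_ne w hw n
    have h2 : P w (n + a) ≠ 0 := P_ne w hw (n + a)
    rw [hidx]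
    field_simp
    rw [hQ]; ring
  · rw [if_neg (by omega : ¬ m ≤ n + a), if_neg hmn, mul_zero]

end Sig

/-- countable index type for a dense family of finitely supported sequences -/
abbrev DD := Σ N : ℕ, (Fin N → ℚ × ℚ)

noncomputable def phi (dd : DD) : ℕ → ℂ := fun j =>
  if h : j < dd.1 then ((dd.2 ⟨j, h⟩).1 : ℂ) + ((dd.2 ⟨j, h⟩).2 : ℂ) * Complex.I else 0

lemma phi_ev (dd : DD) : ∀ i, dd.1 ≤ i → phi dd i = 0 := by
  intro i hi
  rw [phi, dif_neg (by omega)]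

lemma tend0_of_ev {d : ℕ → ℂ} {N : ℕ} (hd : ∀ i, N ≤ i → d i = 0) :
    Tendsto d atTop (nhds 0) := by
  apply Tendsto.congr' _ tendsto_const_nhds
  filter_upwards [eventually_ge_atTop N] with n hn
  exact (hd n hn).symm

lemma rat_approx (z : ℂ) {ε : ℝ} (hε : 0 < ε) :
    ∃ q : ℚ × ℚ, ‖z - ((q.1 : ℂ) + (q.2 : ℂ) * Complex.I)‖ < ε := by
  obtain ⟨q1, hq1⟩ := exists_rat_near z.re (by positivity : (0:ℝ) < ε/2)
  obtain ⟨q2, hq2⟩ := exists_rat_near z.im (by positivity : (0:ℝ) < ε/2)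
  refine ⟨(q1, q2), ?_⟩
  set u : ℂ := z - ((q1 : ℂ) + (q2 : ℂ) * Complex.I) with hu
  have hre : u.re = z.re - q1 := by simp [hu]
  have him : u.im = z.im - q2 := by simp [hu]
  calc ‖u‖ ≤ |u.re| + |u.im| := Complex.norm_le_abs_re_add_abs_im u
    _ < ε := by rw [hre, him]; linarith

lemma phi_dense (f : C₀(ℕ, ℂ)) {ε : ℝ} (hε : 0 < ε) :
    ∃ dd : DD, ∀ n, ‖f n - phi dd n‖ ≤ ε := by
  obtain ⟨N, hN⟩ := eventually_atTop.mp
    ((NormedAddCommGroup.tendsto_nhds_zero.mp (tendsto_zero f)) ε hε)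
  have hch : ∀ j : Fin N, ∃ q : ℚ × ℚ,
      ‖f (j : ℕ) - ((q.1 : ℂ) + (q.2 : ℂ) * Complex.I)‖ < ε :=
    fun j => rat_approx _ hε
  choose q hq using hch
  refine ⟨⟨N, q⟩, fun n => ?_⟩
  by_cases hn : n < N
  · have : phi ⟨N, q⟩ n = ((q ⟨n, hn⟩).1 : ℂ) + ((q ⟨n, hn⟩).2 : ℂ) * Complex.I := by
      rw [phi, dif_pos hn]
    rw [this]
    exact (hq ⟨n, hn⟩).le
  · rw [phi_ev ⟨N, q⟩ n (Nat.le_of_not_lt hn), sub_zero]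
    exact (hN n (by omega)).le

lemma exists_hypercyclic (w : ℕ → ℂ) (hw : ∀ n, w n ≠ 0)
    (T : C₀(ℕ, ℂ) →L[ℂ] C₀(ℕ, ℂ))
    (hT : ∀ (x : C₀(ℕ, ℂ)) (n : ℕ), T x n = w (n + 1) * x (n + 1))
    (hP : Tendsto (fun n => ‖P w n‖) atTop atTop) :
    ∃ x : C₀(ℕ, ℂ), Dense (Set.range fun n : ℕ => (T ^ n) x) := by
  have : Nonempty DD := ⟨⟨0, fun i => i.elim0⟩⟩
  obtain ⟨u, hu⟩ := exists_surjective_nat DD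
  set d : ℕ → DD := fun i => u (Nat.unpair i).1 with hddef
  set φi : ℕ → (ℕ → ℂ) := fun i => phi (d i) with hφdef
  have hφev : ∀ i j, (d i).1 ≤ j → φi i j = 0 := fun i => phi_ev (d i)
  -- choose the shifts
  have hM : ∀ i : ℕ, ∃ M₀, ∀ m, M₀ ≤ m →
      ‖sig w hw hP (φi i) (hφev i) m‖ ≤ (1/2 : ℝ)^i :=
    fun i => sig_norm_small w hw hP (φi i) (hφev i) (by positivity)
  choose M hMspec using hM
  set ns : ℕ → ℕ := fun i =>
    Nat.rec (M 0) (fun j prev => prev + (d j).1 + M (j+1) + 1) i with hnsdef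
  have hns0 : ns 0 = M 0 := rfl
  have hnss : ∀ i, ns (i+1) = ns i + (d i).1 + M (i+1) + 1 := fun i => rfl
  have hmono : Monotone ns := monotone_nat_of_le_succ (fun i => by rw [hnss]; omega)
  have hMns : ∀ i, M i ≤ ns i := by
    intro i
    cases i with
    | zero => exact le_of_eq hns0.symm
    | succ j => rw [hnss]; omega
  have hsupp : ∀ i j, i < j → ns i + (d i).1 ≤ ns j := by
    intro i j hij
    have h1 : ns (i+1) ≤ ns j := hmono hij
    rw [hnss] at h1; omega
  have hgap : ∀ i j, i < j → ns i + M j ≤ ns j := by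
    intro i j hij
    obtain ⟨j', rfl⟩ : ∃ j', j = j' + 1 := ⟨j - 1, by omega⟩
    have h1 : ns i ≤ ns j' := hmono (by omega)
    rw [hnss]; omega
  set a : ℕ → C₀(ℕ, ℂ) := fun j => sig w hw hP (φi j) (hφev j) (ns j) with hadef
  have hanorm : ∀ j, ‖a j‖ ≤ (1/2 : ℝ)^j := fun j => hMspec j (ns j) (hMns j)
  have hsum : Summable a := Summable.of_norm_bounded summable_geometric_two hanorm
  set x : C₀(ℕ, ℂ) := ∑' j, a j with hxdef
  set dC0 : ℕ → C₀(ℕ, ℂ) := fun i => mk0 (φi i) (tend0_of_ev (hφev i)) with hdC0def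
  -- the key orbit estimate
  have hkey : ∀ i, ‖(T ^ (ns i)) x - dC0 i‖ ≤ (1/2 : ℝ)^i := by
    intro i
    set b : ℕ → C₀(ℕ, ℂ) := fun j => (T ^ (ns i)) (a j) with hbdef
    have hbsum : Summable b := hsum.map (T ^ (ns i) : C₀(ℕ, ℂ) →L[ℂ] C₀(ℕ, ℂ)).toLinearMap.toAddMonoidHom
      (T ^ (ns i)).continuous
    have hTx : (T ^ (ns i)) x = ∑' j, b j := (T ^ (ns i)).map_tsum hsum
    have hbi : b i = dC0 i := pow_sig_self w hw hP T hT (φi i) (hφev i) (ns i) _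
    set c : ℕ → C₀(ℕ, ℂ) := fun j => if j = i then 0 else b j with hcdef
    have hsplit : ∑' j, b j = b i + ∑' j, c j := Summable.tsum_eq_add_tsum_ite hbsum i
    have hcb : ∀ j, ‖c j‖ ≤ (fun j => if j ≤ i then (0:ℝ) else (1/2:ℝ)^j) j := by
      intro j
      rcases lt_trichotomy j i with hj | rfl | hj
      · have : b j = 0 := pow_sig_zero w hw hP T hT (φi j) (hφev j) (ns j) (ns i)
          (hsupp j i hj)
        simp [hcdef, if_neg hj.ne, this, if_pos hj.le]
      · simp [hcdef]
      · have hb : b j = sig w hw hP (φi j) (hφev j) (ns j - ns i) :=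
          pow_sig_shift w hw hP T hT (φi j) (hφev j) (ns i) (ns j) (hmono hj.le)
        have : ‖b j‖ ≤ (1/2:ℝ)^j := by
          rw [hb]
          exact hMspec j (ns j - ns i) (by have := hgap i j hj; omega)
        simp only [hcdef, if_neg hj.ne', if_neg (by omega : ¬ j ≤ i)]
        exact this
    have hcsummable : Summable (fun j => if j ≤ i then (0:ℝ) else (1/2:ℝ)^j) := by
      apply Summable.of_nonneg_of_le _ _ summable_geometric_two
      · intro j; by_cases hj : j ≤ i <;> simp [hj]
      · intro j; by_cases hj : j ≤ i <;> simp [hj]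
    have hcnorm : Summable (fun j => ‖c j‖) :=
      Summable.of_nonneg_of_le (fun j => norm_nonneg _) hcb hcsummable
    have htail : ∑' j, (if j ≤ i then (0:ℝ) else (1/2:ℝ)^j) ≤ (1/2:ℝ)^i := by
      have hshift := Summable.sum_add_tsum_nat_add (f := fun j => if j ≤ i then (0:ℝ) else (1/2:ℝ)^j)
        (i+1) hcsummable
      have hzero : (∑ j ∈ Finset.range (i+1), (if j ≤ i then (0:ℝ) else (1/2:ℝ)^j)) = 0 := by
        apply Finset.sum_eq_zero
        intro j hj
        rw [if_pos (by simp at hj; omega)]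
      have heq : ∀ j : ℕ, (if j + (i+1) ≤ i then (0:ℝ) else (1/2:ℝ)^(j + (i+1)))
          = (1/2:ℝ)^(i+1) * (1/2:ℝ)^j := by
        intro j
        rw [if_neg (by omega), pow_add]
        ring
      rw [hzero, zero_add] at hshift
      rw [← hshift]
      have : ∑' (j : ℕ), (if j + (i+1) ≤ i then (0:ℝ) else (1/2:ℝ)^(j + (i+1)))
          = (1/2:ℝ)^(i+1) * 2 := by
        rw [tsum_congr heq, tsum_mul_left, tsum_geometric_two]
      rw [this, pow_succ]
      ring_nf
      exact le_rfl
    calc ‖(T ^ (ns i)) x - dC0 i‖ = ‖∑' j, c j‖ := by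
          rw [hTx, hsplit, hbi, add_sub_cancel_left]
      _ ≤ ∑' j, ‖c j‖ := norm_tsum_le_tsum_norm hcnorm
      _ ≤ ∑' j, (if j ≤ i then (0:ℝ) else (1/2:ℝ)^j) := Summable.tsum_le_tsum hcb hcnorm hcsummable
      _ ≤ (1/2:ℝ)^i := htail
  -- density of the orbit
  refine ⟨x, Metric.dense_iff.mpr fun f ε hε => ?_⟩
  obtain ⟨dd, hdd⟩ := phi_dense f (show (0:ℝ) < ε/4 by positivity)
  obtain ⟨j₀, hj₀⟩ := hu dd
  obtain ⟨m, hm⟩ := exists_pow_lt_of_lt_one (show (0:ℝ) < ε/4 by positivity)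
    (by norm_num : (1/2 : ℝ) < 1)
  set i : ℕ := Nat.pair j₀ m with hidef
  have him : m ≤ i := Nat.right_le_pair j₀ m
  have hdi : d i = dd := by rw [hddef]; simp only [hidef, Nat.unpair_pair]; exact hj₀
  have hpow : (1/2:ℝ)^i ≤ (1/2:ℝ)^m := pow_le_pow_of_le_one (by norm_num) (by norm_num) him
  have hfd : ‖f - dC0 i‖ ≤ ε/4 := by
    apply norm_le_of _ (by positivity)
    intro n
    have : (f - dC0 i) n = f n - φi i n := rfl
    rw [this]
    have : φi i n = phi dd n := by rw [hφdef]; simp only; rw [hdi]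
    rw [this]
    exact hdd n
  refine ⟨(T ^ (ns i)) x, ?_, Set.mem_range_self (ns i)⟩
  rw [Metric.mem_ball, dist_eq_norm]
  calc ‖(T ^ (ns i)) x - f‖ ≤ ‖(T ^ (ns i)) x - dC0 i‖ + ‖dC0 i - f‖ :=
        norm_sub_le_norm_sub_add_norm_sub _ _ _
    _ ≤ (1/2:ℝ)^i + ε/4 := by
        have h2 := hfd
        rw [norm_sub_rev] at h2
        exact add_le_add (hkey i) h2
    _ ≤ ε/4 + ε/4 := by linarith [hpow.trans hm.le]
    _ < ε := by linarith


end WS14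

open Filter WS14 in
/-- Let `B_w : c₀ → c₀` be the weighted backward shift
`B_w((x_n)_n) = (w_{n+1} x_{n+1})_n` associated to a bounded sequence `(w_n)` of nonzero
scalars. Then `B_w` is chaotic if and only if it has dense small periodic sets.
(Here `c₀ = C₀(ℕ, ℂ)` is the Banach space of scalar sequences converging to `0` with
the supremum norm.) -/
theorem weighted_shift_chaotic_iff_denseSmallPeriodicSets
    (w : ℕ → ℂ) (hw : ∀ n, w n ≠ 0) (hbd : ∃ C : ℝ, ∀ n, ‖w n‖ ≤ C)
    (T : C₀(ℕ, ℂ) →L[ℂ] C₀(ℕ, ℂ))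
    (hT : ∀ (x : C₀(ℕ, ℂ)) (n : ℕ), T x n = w (n + 1) * x (n + 1)) :
    -- T is chaotic
    ((∃ x : C₀(ℕ, ℂ), Dense (Set.range fun n : ℕ => (T ^ n) x)) ∧
      Dense {x : C₀(ℕ, ℂ) | ∃ n : ℕ, 1 ≤ n ∧ (T ^ n) x = x}) ↔
    -- T has dense small periodic sets
    (∀ U : Set C₀(ℕ, ℂ), IsOpen U → U.Nonempty →
      ∃ Y : Set C₀(ℕ, ℂ), Y.Nonempty ∧ IsClosed Y ∧ Y ⊆ U ∧
        ∃ k : ℕ, 1 ≤ k ∧ (fun y => (T ^ k) y) '' Y ⊆ Y) := by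
  constructor
  · rintro ⟨-, hper⟩ U hU hUne
    obtain ⟨p, hpPer, hpU⟩ := hper.exists_mem_open hU hUne
    obtain ⟨n, hn1, hfix⟩ := hpPer
    exact ⟨{p}, ⟨p, rfl⟩, isClosed_singleton, Set.singleton_subset_iff.mpr hpU, n, hn1,
      by rw [Set.image_singleton]; exact Set.singleton_subset_iff.mpr hfix⟩
  · intro h
    have hP := norm_P_tendsto w hw hbd T hT h
    exact ⟨exists_hypercyclic w hw T hT hP, dense_periodic w hw T hT hP⟩
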